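/- arXiv:2101.04703 — 5 statements merged into one kernel-verified Lean document; each statement's English description precedes it below -/
import Mathlib

section
/- Let G be a connected graph and let P: v_1, v_2, ..., v_{d+1} be a shortest path in G whose length d equals the diameter of G. Then for every i with 2 ≤ i ≤ d, if every vertex of G not on P is simplicial (its neighborhood induces a complete graph), then v_{i-1} and v_{i+1} lie in different connected components of G − v_i. -/
open SimpleGraph

def completeNeighborhood {V : Type} (G : SimpleGraph V) (v : V) : SimpleGraph V where
  Adj u w := G.Adj u w ∨ (u ≠ w ∧ G.Adj v u ∧ G.Adj v w)
  symm := by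
    constructor
    intro a b h
    rcases h with h | ⟨h1, h2, h3⟩
    · exact Or.inl h.symm
    · exact Or.inr ⟨h1.symm, h3, h2⟩
  loopless := by
    constructor
    intro a h
    rcases h with h | ⟨h, -⟩
    · exact G.irrefl h
    · exact h rfl

abbrev deleteVert {V : Type} (G : SimpleGraph V) (x : V) :
    SimpleGraph ({x}ᶜ : Set V) :=
  G.induce ({x}ᶜ : Set V)

def IsSimplicial {V : Type} (G : SimpleGraph V) (v : V) : Prop :=
  G.IsClique (G.neighborSet v)

noncomputable def fval {V : Type} (G : SimpleGraph V) : ℕ :=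
  {v | IsSimplicial G v}.ncard

noncomputable def ivval {V : Type} (G : SimpleGraph V) : ℕ :=
  {v | ¬ IsSimplicial G v}.ncard

noncomputable def dval {V : Type} (G : SimpleGraph V) : ℕ :=
  {v | ∀ u, ¬ G.Adj v u}.ncard +
    ∑ᶠ c : G.ConnectedComponent, (G.induce c.supp).diam

lemma exists_walk_to_getVert {W : Type*} {H : SimpleGraph W} {u v : W}
    (w : H.Walk u v) (t : ℕ) : ∃ q : H.Walk u (w.getVert t), q.length ≤ t := by
  induction t with
  | zero => exact ⟨Walk.nil.copy rfl (w.getVert_zero).symm, by simp⟩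
  | succ t ih =>
    obtain ⟨q, hq⟩ := ih
    by_cases h : t < w.length
    · exact ⟨q.concat (w.adj_getVert_succ h), by rw [Walk.length_concat]; omega⟩
    · push_neg at h
      refine ⟨q.copy rfl ?_, by rw [Walk.length_copy]; omega⟩
      rw [w.getVert_of_length_le h, w.getVert_of_length_le (by omega)]

lemma dist_getVert_eq {W : Type*} {H : SimpleGraph W} {u v : W}
    (w : H.Walk u v) (hw : w.length = H.dist u v) {t : ℕ} (ht : t ≤ w.length) :
    H.dist u (w.getVert t) = t := by
  obtain ⟨q0, hq0⟩ := exists_walk_to_getVert w t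
  refine le_antisymm (le_trans (dist_le q0) hq0) ?_
  obtain ⟨q, hq⟩ := exists_walk_to_getVert w.reverse (w.length - t)
  have h1 : w.reverse.getVert (w.length - t) = w.getVert t := by
    rw [Walk.getVert_reverse]; congr 1; omega
  obtain ⟨r, hr⟩ := SimpleGraph.Reachable.exists_walk_length_eq_dist
    (⟨q0⟩ : H.Reachable u (w.getVert t))
  have := dist_le (r.append ((q.copy rfl h1).reverse))
  rw [Walk.length_append, Walk.length_reverse, Walk.length_copy, hr] at this
  omega

/-- if `P : v_1, …, v_{d+1}` (here `p 0, …, p d`) is a shortest path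
realizing the diameter `d` of a connected graph `G`, and every vertex of `G` not on
`P` is simplicial, then for `1 ≤ j ≤ d - 1` the vertices `p (j-1)` and `p (j+1)` lie
in different connected components of `G - p j`. -/
theorem stmt0 {V : Type} [Fintype V] [DecidableEq V] (G : SimpleGraph V)
    (hconn : G.Connected) (d : ℕ) (hdiam : G.diam = d)
    (p : ℕ → V)
    (hadj : ∀ i < d, G.Adj (p i) (p (i + 1)))
    (hinj : ∀ i ≤ d, ∀ j ≤ d, p i = p j → i = j)
    (hdist : G.dist (p 0) (p d) = d)
    (hsimp : ∀ x : V, (∀ i ≤ d, x ≠ p i) → IsSimplicial G x)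
    (j : ℕ) (hj1 : 1 ≤ j) (hj2 : j + 1 ≤ d)
    (h1 : p (j - 1) ∈ ({p j}ᶜ : Set V)) (h2 : p (j + 1) ∈ ({p j}ᶜ : Set V)) :
    ¬ (deleteVert G (p j)).Reachable ⟨p (j - 1), h1⟩ ⟨p (j + 1), h2⟩ := by
  intro hreach
  classical
  -- distances along the geodesic p
  have hwalkp : ∀ a n, a + n ≤ d → ∃ q : G.Walk (p a) (p (a + n)), q.length = n := by
    intro a n
    induction n with
    | zero => exact fun _ => ⟨Walk.nil, rfl⟩
    | succ n ih =>
      intro h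
      obtain ⟨q, hq⟩ := ih (by omega)
      exact ⟨q.concat (hadj (a + n) (by omega)), by rw [Walk.length_concat, hq]⟩
  have hdle : ∀ a b, a ≤ b → b ≤ d → G.dist (p a) (p b) ≤ b - a := by
    intro a b hab hbd
    obtain ⟨q, hq⟩ := hwalkp a (b - a) (by omega)
    have hab' : a + (b - a) = b := by omega
    have := dist_le (q.copy rfl (congrArg p hab'))
    rw [Walk.length_copy, hq] at this
    exact this
  have hd : ∀ a b, a ≤ b → b ≤ d → G.dist (p a) (p b) = b - a := by
    intro a b hab hbd
    refine le_antisymm (hdle a b hab hbd) ?_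
    have t1 := hconn.dist_triangle (u := p 0) (v := p a) (w := p d)
    have t2 := hconn.dist_triangle (u := p a) (v := p b) (w := p d)
    have h0a := hdle 0 a (by omega) (by omega)
    have hbd' := hdle b d hbd le_rfl
    omega
  -- the walk in the vertex-deleted graph
  obtain ⟨w, hw⟩ := hreach.exists_walk_length_eq_dist
  set k := w.length with hk
  have hadjG : ∀ t, t < k →
      G.Adj ((w.getVert t : ({p j}ᶜ : Set V)) : V) ((w.getVert (t + 1) : ({p j}ᶜ : Set V)) : V) := by
    intro t ht
    have := w.adj_getVert_succ ht
    simpa [deleteVert] using this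
  have hne_pj : ∀ t, ((w.getVert t : ({p j}ᶜ : Set V)) : V) ≠ p j := by
    intro t h
    exact (w.getVert t).2 h
  have hdt : ∀ t, t ≤ k →
      (deleteVert G (p j)).dist ⟨p (j - 1), h1⟩ (w.getVert t) = t :=
    fun t ht => dist_getVert_eq w hw ht
  have hq0 : ((w.getVert 0 : ({p j}ᶜ : Set V)) : V) = p (j - 1) := by
    rw [w.getVert_zero]
  have hqk : ((w.getVert k : ({p j}ᶜ : Set V)) : V) = p (j + 1) := by
    rw [w.getVert_length]
  by_cases hall : ∀ t ≤ k, ∃ i ≤ d, ((w.getVert t : ({p j}ᶜ : Set V)) : V) = p i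
  · -- all vertices of the walk lie on the geodesic: discrete IVT contradiction
    have hall' : ∀ t, ∃ i, t ≤ k → (i ≤ d ∧ ((w.getVert t : ({p j}ᶜ : Set V)) : V) = p i) := by
      intro t
      by_cases ht : t ≤ k
      · obtain ⟨i, hi1, hi2⟩ := hall t ht
        exact ⟨i, fun _ => ⟨hi1, hi2⟩⟩
      · exact ⟨0, fun h => absurd h ht⟩
    choose m hm using hall'
    have m0 : m 0 = j - 1 := by
      have h := hm 0 (Nat.zero_le _)
      exact hinj (m 0) h.1 (j - 1) (by omega) (h.2.symm.trans hq0)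
    have mk : m k = j + 1 := by
      have h := hm k le_rfl
      exact hinj (m k) h.1 (j + 1) hj2 (h.2.symm.trans hqk)
    have mnej : ∀ t, t ≤ k → m t ≠ j := by
      intro t ht heq
      exact hne_pj t (heq ▸ (hm t ht).2)
    have step : ∀ t, t < k → m (t + 1) ≤ m t + 1 ∧ m t ≤ m (t + 1) + 1 := by
      intro t ht
      have adj := hadjG t ht
      rw [(hm t (by omega)).2, (hm (t + 1) (by omega)).2] at adj
      rcases le_total (m t) (m (t + 1)) with h | h
      · have := hd (m t) (m (t + 1)) h (hm (t + 1) (by omega)).1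
        rw [dist_eq_one_iff_adj.mpr adj] at this
        omega
      · have := hd (m (t + 1)) (m t) h (hm t (by omega)).1
        rw [dist_eq_one_iff_adj.mpr adj.symm] at this
        omega
    -- find the first time the index exceeds j
    have hex : ∃ t, j < m t ∧ t ≤ k := ⟨k, by omega, le_rfl⟩
    obtain ⟨t0, ht0spec, ht0min⟩ :
        ∃ t0, (j < m t0 ∧ t0 ≤ k) ∧ ∀ s, s < t0 → ¬(j < m s ∧ s ≤ k) :=
      ⟨Nat.find hex, Nat.find_spec hex, fun s hs => Nat.find_min hex hs⟩
    rcases Nat.eq_zero_or_pos t0 with hz | hpos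
    · rw [hz] at ht0spec
      omega
    · obtain ⟨s, hseq⟩ : ∃ s, t0 = s + 1 := ⟨t0 - 1, by omega⟩
      rw [hseq] at ht0spec
      rw [hseq] at ht0min
      have hsk : s + 1 ≤ k := ht0spec.2
      have hns := ht0min s (by omega)
      have hms : m s ≤ j := by
        by_contra h
        exact hns ⟨by omega, by omega⟩
      have hmsne := mnej s (by omega)
      have hst := step s (by omega)
      have hlt := ht0spec.1
      omega
  · push_neg at hall
    obtain ⟨t, htk, hx⟩ := hall
    have ht0 : t ≠ 0 := by
      intro h
      exact hx (j - 1) (by omega) (h ▸ hq0)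
    have htk' : t ≠ k := by
      intro h
      exact hx (j + 1) hj2 (h ▸ hqk)
    have ht1 : 1 ≤ t := by omega
    have htlt : t < k := by omega
    have hsx := hsimp _ (fun i hi hxe => hx i hi hxe)
    have hadj1 : G.Adj ((w.getVert t : ({p j}ᶜ : Set V)) : V)
        ((w.getVert (t - 1) : ({p j}ᶜ : Set V)) : V) := by
      have := hadjG (t - 1) (by omega)
      rw [show t - 1 + 1 = t by omega] at this
      exact this.symm
    have hadj2 : G.Adj ((w.getVert t : ({p j}ᶜ : Set V)) : V)
        ((w.getVert (t + 1) : ({p j}ᶜ : Set V)) : V) := hadjG t htlt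
    have hne : ((w.getVert (t - 1) : ({p j}ᶜ : Set V)) : V)
        ≠ ((w.getVert (t + 1) : ({p j}ᶜ : Set V)) : V) := by
      intro h
      have hsub : w.getVert (t - 1) = w.getVert (t + 1) := Subtype.ext h
      have e1 := hdt (t - 1) (by omega)
      have e2 := hdt (t + 1) (by omega)
      rw [hsub] at e1
      omega
    have hcl : G.Adj ((w.getVert (t - 1) : ({p j}ᶜ : Set V)) : V)
        ((w.getVert (t + 1) : ({p j}ᶜ : Set V)) : V) :=
      hsx hadj1 hadj2 hne
    have hcl' : (deleteVert G (p j)).Adj (w.getVert (t - 1)) (w.getVert (t + 1)) := by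
      simpa [deleteVert] using hcl
    obtain ⟨r, hr⟩ := exists_walk_to_getVert w (t - 1)
    have := dist_le (r.concat hcl')
    rw [Walk.length_concat] at this
    have e2 := hdt (t + 1) (by omega)
    omega
end

section
/- Let G be a connected graph with diameter d ≥ 2, let v be a non-simplicial vertex of G, and let G_v be the graph obtained from G by completing the neighborhood of v. Then for any two vertices α, β of G with d_G(α,β) = d, one has d_{G_v}(α,β) ≥ d − 1; in particular diam(G_v) ≥ diam(G) − 1. -/
open SimpleGraph

lemma cn_key {V : Type} {G : SimpleGraph V} (hconn : G.Connected) (v : V) {c β : V}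
    (W : (completeNeighborhood G v).Walk c β) :
    G.dist c β ≤ W.length ∨ G.dist c v + G.dist v β ≤ W.length + 1 := by
  induction W with
  | nil => left; simp
  | @cons a b β h W ih =>
      rw [SimpleGraph.Walk.length_cons]
      rcases ih with ih | ih
      · rcases h with hG | ⟨hne, hva, hvb⟩
        · left
          calc G.dist a β ≤ G.dist a b + G.dist b β := hconn.dist_triangle
            _ ≤ 1 + W.length := add_le_add (by simpa using SimpleGraph.dist_le hG.toWalk : G.dist a b ≤ 1) ih
            _ = W.length + 1 := by omega
        · right
          have h1 : G.dist a v ≤ 1 := (by simpa using SimpleGraph.dist_le hva.symm.toWalk : G.dist a v ≤ 1)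
          have h2 : G.dist v β ≤ G.dist v b + G.dist b β := hconn.dist_triangle
          have h3 : G.dist v b ≤ 1 := (by simpa using SimpleGraph.dist_le hvb.toWalk : G.dist v b ≤ 1)
          omega
      · right
        rcases h with hG | ⟨hne, hva, hvb⟩
        · have h1 : G.dist a v ≤ G.dist a b + G.dist b v := hconn.dist_triangle
          have h2 : G.dist a b ≤ 1 := (by simpa using SimpleGraph.dist_le hG.toWalk : G.dist a b ≤ 1)
          omega
        · have h1 : G.dist a v ≤ 1 := (by simpa using SimpleGraph.dist_le hva.symm.toWalk : G.dist a v ≤ 1)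
          omega

lemma cn_dist_ge {V : Type} {G : SimpleGraph V} (hconn : G.Connected) (v : V) {α β : V} :
    G.dist α β ≤ (completeNeighborhood G v).dist α β + 1 := by
  have hle : G ≤ completeNeighborhood G v := fun a b hab => Or.inl hab
  have hr : (completeNeighborhood G v).Reachable α β := (hconn α β).mono hle
  obtain ⟨W, hW⟩ := hr.exists_walk_length_eq_dist
  rcases cn_key hconn v W with h1 | h1
  · omega
  · have h2 : G.dist α β ≤ G.dist α v + G.dist v β := hconn.dist_triangle
    omega

/-- completing the neighborhood of a non-simplicial vertex decreases
distances between diametral pairs, and hence the diameter, by at most one. -/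
theorem stmt2 {V : Type} [Fintype V] [DecidableEq V] (G : SimpleGraph V)
    (hconn : G.Connected) (d : ℕ) (hdiam : G.diam = d) (hd2 : 2 ≤ d)
    (v : V) (hv : ¬ IsSimplicial G v) :
    (∀ α β : V, G.dist α β = d → d - 1 ≤ (completeNeighborhood G v).dist α β) ∧
      d - 1 ≤ (completeNeighborhood G v).diam := by
  have hle : G ≤ completeNeighborhood G v := fun a b hab => Or.inl hab
  have hconn' : (completeNeighborhood G v).Connected := hconn.mono hle
  have hne : Nonempty V := hconn.nonempty
  have part1 : ∀ α β : V, G.dist α β = d → d - 1 ≤ (completeNeighborhood G v).dist α β := by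
    intro α β hab
    have := cn_dist_ge hconn v (α := α) (β := β)
    omega
  refine ⟨part1, ?_⟩
  obtain ⟨α, β, hab⟩ := G.exists_dist_eq_diam
  have h1 := part1 α β (by rw [hab, hdiam])
  have hntop : (completeNeighborhood G v).ediam ≠ ⊤ := by
    obtain ⟨u, w, huw⟩ := (completeNeighborhood G v).exists_edist_eq_ediam_of_finite
    rw [← huw]
    exact SimpleGraph.edist_ne_top_iff_reachable.mpr (hconn' u w)
  calc d - 1 ≤ (completeNeighborhood G v).dist α β := h1
    _ ≤ (completeNeighborhood G v).diam := SimpleGraph.dist_le_diam hntop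
end

section
/- Let G be a connected graph with diameter d ≥ 2 and let v be a non-simplicial vertex of G. Let G_v be obtained from G by completing the neighborhood of v. Then the graph G_v − v (deleting v from G_v) has a connected component of diameter at least d − 1; in particular d(G_v − v) ≥ diam(G) − 1, where d(H) denotes the sum over connected components H_i of H of diam(H_i) plus the number of isolated vertices of H. -/
open SimpleGraph

-- iso preserves edist
lemma iso_edist {A B : Type*} {G1 : SimpleGraph A} {G2 : SimpleGraph B} (e : G1 ≃g G2)
    (a b : A) : G2.edist (e a) (e b) ≤ G1.edist a b := by
  rw [edist_eq_sInf (G := G1)]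
  refine le_sInf ?_
  rintro x ⟨w, rfl⟩
  simpa using edist_le (w.map e.toHom)

lemma iso_edist_eq {A B : Type*} {G1 : SimpleGraph A} {G2 : SimpleGraph B} (e : G1 ≃g G2)
    (a b : A) : G2.edist (e a) (e b) = G1.edist a b := by
  refine le_antisymm (iso_edist e a b) ?_
  have := iso_edist e.symm (e a) (e b)
  simpa using this

lemma iso_ediam {A B : Type*} {G1 : SimpleGraph A} {G2 : SimpleGraph B} (e : G1 ≃g G2) :
    G1.ediam = G2.ediam := by
  refine le_antisymm ?_ ?_
  · refine ediam_le_of_edist_le fun u w => ?_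
    rw [← iso_edist_eq e u w]; exact edist_le_ediam
  · refine ediam_le_of_edist_le fun u w => ?_
    rw [← iso_edist_eq e.symm u w]; exact edist_le_ediam

lemma iso_diam {A B : Type*} {G1 : SimpleGraph A} {G2 : SimpleGraph B} (e : G1 ≃g G2) :
    G1.diam = G2.diam := by
  rw [diam, diam, iso_ediam e]

lemma key {V : Type} (G : SimpleGraph V) (hconn : G.Connected) (v : V) :
    ∀ {a b : V} (W : (completeNeighborhood G v).Walk a b),
      G.dist a b ≤ W.length ∨ (G.dist a b ≤ W.length + 1 ∧ G.dist v b ≤ W.length) := by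
  intro a b W
  induction W with
  | nil => exact Or.inl (by simp)
  | @cons a c b h p ih =>
    simp only [Walk.length_cons]
    rcases h with h1 | ⟨hne, hva, hvc⟩
    · have hd1 : G.dist a c ≤ 1 := dist_le (Walk.cons h1 Walk.nil)
      rcases ih with h2 | ⟨h2, h3⟩
      · exact Or.inl (le_trans (hconn.dist_triangle (v := c)) (by omega))
      · refine Or.inr ⟨le_trans (hconn.dist_triangle (v := c)) (by omega), by omega⟩
    · have hda : G.dist a v ≤ 1 := dist_le (Walk.cons hva.symm Walk.nil)
      have hdc : G.dist v c ≤ 1 := dist_le (Walk.cons hvc Walk.nil)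
      have hvb : G.dist v b ≤ p.length + 1 := by
        rcases ih with h2 | ⟨h2, h3⟩
        · exact le_trans (hconn.dist_triangle (v := c)) (by omega)
        · omega
      refine Or.inr ⟨le_trans (hconn.dist_triangle (v := v)) (by omega), hvb⟩

lemma reach {V : Type} (G : SimpleGraph V) (v : V) :
    ∀ (n : ℕ) {a b : V} (ha : a ∈ ({v}ᶜ : Set V)) (hb : b ∈ ({v}ᶜ : Set V))
      (W : G.Walk a b), W.length ≤ n →
      (deleteVert (completeNeighborhood G v) v).Reachable ⟨a, ha⟩ ⟨b, hb⟩ := by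
  intro n
  induction n with
  | zero =>
    intro a b ha hb W hW
    have : a = b := W.eq_of_length_eq_zero (Nat.le_zero.mp hW)
    subst this
    rfl
  | succ n ih =>
    intro a b ha hb W hW
    cases W with
    | nil => rfl
    | @cons _ c _ h p =>
      by_cases hc : c = v
      · cases p with
        | nil => exact absurd hc (by simpa using hb)
        | @cons _ c2 _ h2 q =>
          have hva : G.Adj v a := hc ▸ h.symm
          have hvc2 : G.Adj v c2 := hc ▸ h2
          have hc2 : c2 ∈ ({v}ᶜ : Set V) := by simpa using hvc2.ne.symm
          have hr2 : (deleteVert (completeNeighborhood G v) v).Reachable ⟨c2, hc2⟩ ⟨b, hb⟩ := by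
            refine ih hc2 hb q ?_
            simp only [Walk.length_cons] at hW; omega
          by_cases hac : a = c2
          · subst hac; exact hr2
          · have hadj : (deleteVert (completeNeighborhood G v) v).Adj ⟨a, ha⟩ ⟨c2, hc2⟩ :=
              Or.inr ⟨hac, hva, hvc2⟩
            exact hadj.reachable.trans hr2
      · have hcm : c ∈ ({v}ᶜ : Set V) := by simpa using hc
        have hadj : (deleteVert (completeNeighborhood G v) v).Adj ⟨a, ha⟩ ⟨c, hcm⟩ := Or.inl h
        refine hadj.reachable.trans (ih hcm hb p ?_)
        simp only [Walk.length_cons] at hW; omega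

/-- for a non-simplicial vertex `v` of a connected graph `G` of diameter
`d ≥ 2`, the graph `G_v - v` has a connected component of diameter at least `d - 1`;
in particular `d(G_v - v) ≥ d - 1`. -/
theorem stmt3 {V : Type} [Fintype V] [DecidableEq V] (G : SimpleGraph V)
    (hconn : G.Connected) (d : ℕ) (hdiam : G.diam = d) (hd2 : 2 ≤ d)
    (v : V) (hv : ¬ IsSimplicial G v) :
    (∃ c : (deleteVert (completeNeighborhood G v) v).ConnectedComponent,
        d - 1 ≤ ((deleteVert (completeNeighborhood G v) v).induce c.supp).diam) ∧
      d - 1 ≤ dval (deleteVert (completeNeighborhood G v) v) := by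
  classical
  have hnt : Nontrivial V := nontrivial_of_diam_ne_zero (by rw [hdiam]; omega)
  have hne : (G.neighborSet v).Nonempty := by
    rcases Set.eq_empty_or_nonempty (G.neighborSet v) with h | h
    · exact absurd (by rw [IsSimplicial, h]; simp) hv
    · exact h
  obtain ⟨u0, hu0⟩ := hne
  have hu0adj : G.Adj v u0 := hu0
  have hu0v : u0 ∈ ({v}ᶜ : Set V) := by simpa using hu0adj.ne.symm
  set H := deleteVert (completeNeighborhood G v) v with hHdef
  have hpre : H.Preconnected := by
    rintro ⟨p, hp⟩ ⟨q, hq⟩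
    obtain ⟨W⟩ := hconn.preconnected p q
    exact reach G v W.length hp hq W le_rfl
  obtain ⟨a, b, ha, hb, hprop⟩ :
      ∃ (a b : V) (_ : a ∈ ({v}ᶜ : Set V)) (_ : b ∈ ({v}ᶜ : Set V)),
        ∀ ℓ : ℕ, (G.dist a b ≤ ℓ ∨ (G.dist a b ≤ ℓ + 1 ∧ G.dist v b ≤ ℓ)) → d - 1 ≤ ℓ := by
    obtain ⟨x, y, hxy⟩ := exists_dist_eq_diam (G := G)
    rw [hdiam] at hxy
    have hd1 : G.dist v u0 ≤ 1 := dist_le (Walk.cons hu0adj Walk.nil)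
    by_cases hx : x = v
    · rw [hx] at hxy
      have hyv : y ≠ v := by
        intro h; rw [h, SimpleGraph.dist_self] at hxy; omega
      refine ⟨u0, y, by simpa using hu0adj.ne.symm, by simpa using hyv, ?_⟩
      intro ℓ hl
      have htri : G.dist v y ≤ G.dist v u0 + G.dist u0 y := hconn.dist_triangle
      rcases hl with h | ⟨h2, h3⟩ <;> omega
    · by_cases hy : y = v
      · rw [hy] at hxy
        have hxv : x ≠ v := hx
        have hxy' : G.dist v x = d := by rw [SimpleGraph.dist_comm]; exact hxy
        refine ⟨u0, x, by simpa using hu0adj.ne.symm, by simpa using hxv, ?_⟩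
        intro ℓ hl
        have htri : G.dist v x ≤ G.dist v u0 + G.dist u0 x := hconn.dist_triangle
        rcases hl with h | ⟨h2, h3⟩ <;> omega
      · refine ⟨x, y, by simpa using hx, by simpa using hy, ?_⟩
        intro ℓ hl
        rcases hl with h | ⟨h2, h3⟩ <;> omega
  obtain ⟨p, hp⟩ := (hpre ⟨a, ha⟩ ⟨b, hb⟩).exists_walk_length_eq_dist
  have hmap := key G hconn v (p.map (Embedding.induce ({v}ᶜ : Set V)).toHom)
  rw [Walk.length_map] at hmap
  have hdistH : d - 1 ≤ H.dist ⟨a, ha⟩ ⟨b, hb⟩ := by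
    rw [← hp]
    exact hprop p.length hmap
  have hSne : Nonempty ({v}ᶜ : Set V) := ⟨⟨u0, hu0v⟩⟩
  obtain ⟨pp, qq, hpq⟩ := exists_edist_eq_ediam_of_finite (G := H)
  have hnetop : H.ediam ≠ ⊤ := by
    rw [← hpq]; exact edist_ne_top_iff_reachable.2 (hpre pp qq)
  have hdiamH : d - 1 ≤ H.diam := le_trans hdistH (dist_le_diam hnetop)
  let c : H.ConnectedComponent := H.connectedComponentMk ⟨u0, hu0v⟩
  have hsupp : c.supp = Set.univ := by
    ext w
    simp only [ConnectedComponent.mem_supp_iff, Set.mem_univ, iff_true]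
    exact ConnectedComponent.eq.mpr (hpre w ⟨u0, hu0v⟩)
  have hcd : d - 1 ≤ (H.induce c.supp).diam := by
    rw [hsupp, iso_diam (induceUnivIso H)]
    exact hdiamH
  refine ⟨⟨c, hcd⟩, ?_⟩
  letI : Unique H.ConnectedComponent :=
    ⟨⟨c⟩, fun c' =>
      ConnectedComponent.ind (fun w => ConnectedComponent.eq.mpr (hpre w ⟨u0, hu0v⟩)) c'⟩
  have hsum : ∑ᶠ c2 : H.ConnectedComponent, (H.induce c2.supp).diam
      = (H.induce c.supp).diam := by
    rw [finsum_unique]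
    rfl
  unfold dval
  rw [hsum]
  omega
end

section
/- Let G be a connected graph, let P: v_1,...,v_{d+1} be a shortest path realizing the diameter d of G, and suppose every vertex not on P is simplicial and every non-simplicial vertex lies on P. If for some 2 ≤ j ≤ d a vertex n_j ∉ V(P) satisfies {n_j, v_j} ∈ E(G) and {n_j, v_{j+1}} ∈ E(G), then d_{G − v_j}(n_j, v_{d+1}) = d − j + 1. -/
open SimpleGraph

/-- with `P : p 0, …, p d` an induced shortest path realizing the
diameter `d` (so `v_k = p (k-1)`), and every vertex off `P` simplicial, if a vertex
`x ∉ V(P)` is adjacent to `p k` and `p (k+1)` (i.e. to `v_j` and `v_{j+1}` with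
`j = k + 1`, `2 ≤ j ≤ d`), then `d_{G - v_j}(x, v_{d+1}) = d - j + 1 = d - k`. -/
theorem stmt6 {V : Type} [Fintype V] [DecidableEq V] (G : SimpleGraph V)
    (hconn : G.Connected) (d : ℕ) (hdiam : G.diam = d)
    (p : ℕ → V)
    (hadj : ∀ i < d, G.Adj (p i) (p (i + 1)))
    (hinj : ∀ i ≤ d, ∀ j ≤ d, p i = p j → i = j)
    (hdist : G.dist (p 0) (p d) = d)
    (hsimp : ∀ x : V, (∀ i ≤ d, x ≠ p i) → IsSimplicial G x)
    (k : ℕ) (hk1 : 1 ≤ k) (hk2 : k + 1 ≤ d)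
    (x : V) (hx : ∀ i ≤ d, x ≠ p i)
    (hxk : G.Adj x (p k)) (hxk1 : G.Adj x (p (k + 1)))
    (hmem1 : x ∈ ({p k}ᶜ : Set V)) (hmem2 : p d ∈ ({p k}ᶜ : Set V)) :
    (deleteVert G (p k)).dist ⟨x, hmem1⟩ ⟨p d, hmem2⟩ = d - k := by
  classical
  -- basic distance facts along the path
  have hle : ∀ m : ℕ, ∀ i : ℕ, i + m ≤ d → G.dist (p i) (p (i + m)) ≤ m := by
    intro m
    induction m with
    | zero => intro i _; simp [SimpleGraph.dist_self]
    | succ m ih =>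
      intro i h
      have h1 : G.dist (p i) (p (i + 1)) ≤ 1 := by
        have := SimpleGraph.dist_le (hadj i (by omega)).toWalk
        simpa [SimpleGraph.Adj.toWalk] using this
      have h2 : G.dist (p (i + 1)) (p (i + 1 + m)) ≤ m := ih (i + 1) (by omega)
      have := hconn.dist_triangle (u := p i) (v := p (i + 1)) (w := p (i + 1 + m))
      have : G.dist (p i) (p (i + 1 + m)) ≤ 1 + m := le_trans this (by omega)
      have he : i + 1 + m = i + (m + 1) := by omega
      rw [he] at this
      omega
  have hdk : G.dist (p k) (p d) = d - k := by
    have h1 : G.dist (p 0) (p k) ≤ k := by simpa using hle k 0 (by omega)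
    have h2 : G.dist (p k) (p d) ≤ d - k := by
      have := hle (d - k) k (by omega)
      rwa [show k + (d - k) = d by omega] at this
    have h3 := hconn.dist_triangle (u := p 0) (v := p k) (w := p d)
    rw [hdist] at h3
    omega
  -- membership of path vertices off p k
  have hpmem : ∀ i : ℕ, i ≤ d → i ≠ k → p i ∈ ({p k}ᶜ : Set V) := by
    intro i hi hik
    simp only [Set.mem_compl_iff, Set.mem_singleton_iff]
    intro h
    exact hik (hinj i hi k (by omega) h)
  -- a walk from p (k+1) to p d inside deleteVert, of length d - k - 1
  have hwalk : ∀ m : ℕ, ∀ i : ℕ, ∀ (hki : k < i) (him : i + m ≤ d),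
      ∃ W : (deleteVert G (p k)).Walk ⟨p i, hpmem i (by omega) (by omega)⟩
        ⟨p (i + m), hpmem (i + m) (by omega) (by omega)⟩, W.length = m := by
    intro m
    induction m with
    | zero => intro i h1 h2; exact ⟨SimpleGraph.Walk.nil, rfl⟩
    | succ m ih =>
      intro i h1 h2
      obtain ⟨W, hW⟩ := ih (i + 1) (by omega) (by omega)
      have ha : (deleteVert G (p k)).Adj ⟨p i, hpmem i (by omega) (by omega)⟩
          ⟨p (i + 1), hpmem (i + 1) (by omega) (by omega)⟩ := by
        simp only [deleteVert, SimpleGraph.comap_adj, Function.Embedding.coe_subtype]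
        exact hadj i (by omega)
      have he : i + 1 + m = i + (m + 1) := by omega
      refine ⟨(SimpleGraph.Walk.cons ha (W.copy rfl (by apply Subtype.ext; show p (i+1+m) = p (i+(m+1)); rw [show i+1+m = i+(m+1) from by omega]))), ?_⟩
      simp [hW]
  obtain ⟨W0, hW0⟩ := hwalk (d - (k + 1)) (k + 1) (by omega) (by omega)
  have hxadj : (deleteVert G (p k)).Adj ⟨x, hmem1⟩
      ⟨p (k + 1), hpmem (k + 1) (by omega) (by omega)⟩ := by
    simp only [deleteVert, SimpleGraph.comap_adj, Function.Embedding.coe_subtype]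
    exact hxk1
  have heq : k + 1 + (d - (k + 1)) = d := by omega
  -- the full walk from x to p d
  let Wfull : (deleteVert G (p k)).Walk ⟨x, hmem1⟩ ⟨p d, hmem2⟩ :=
    SimpleGraph.Walk.cons hxadj ((W0.copy rfl (by congr 1)).copy rfl (by
      apply Subtype.ext; simp [heq]))
  have hupper : (deleteVert G (p k)).dist ⟨x, hmem1⟩ ⟨p d, hmem2⟩ ≤ d - k := by
    have := SimpleGraph.dist_le Wfull
    simp only [Wfull, SimpleGraph.Walk.length_cons, SimpleGraph.Walk.length_copy] at this
    omega
  -- lower bound: every walk has length ≥ d - k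
  have hlower : ∀ W : (deleteVert G (p k)).Walk ⟨x, hmem1⟩ ⟨p d, hmem2⟩,
      d - k ≤ W.length := by
    intro W
    have hne : (⟨x, hmem1⟩ : ({p k}ᶜ : Set V)) ≠ ⟨p d, hmem2⟩ := by
      intro h
      exact hx d le_rfl (congrArg Subtype.val h)
    obtain ⟨w1, hadj1, W', rfl⟩ := SimpleGraph.Walk.exists_eq_cons_of_ne hne W
    -- map the tail walk into G
    have hdistw1 : G.dist (w1 : V) (p d) ≤ W'.length := by
      have := SimpleGraph.dist_le (W'.map (SimpleGraph.Embedding.induce ({p k}ᶜ : Set V)).toHom)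
      exact this.trans_eq (by rw [SimpleGraph.Walk.length_map])
    -- x is simplicial, so p k and w1 are adjacent
    have hxw1 : G.Adj x (w1 : V) := by
      simpa [deleteVert, SimpleGraph.comap_adj] using hadj1
    have hw1ne : (w1 : V) ≠ p k := fun h => w1.2 h
    have hclique := hsimp x hx
    have hadjkw1 : G.Adj (p k) (w1 : V) :=
      hclique hxk hxw1 (Ne.symm hw1ne)
    have h1 : G.dist (p k) (p d) ≤ 1 + W'.length := by
      have h2 : G.dist (p k) (w1 : V) ≤ 1 := by
        have := SimpleGraph.dist_le hadjkw1.toWalk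
        simpa [SimpleGraph.Adj.toWalk] using this
      have := hconn.dist_triangle (u := p k) (v := (w1 : V)) (w := p d)
      omega
    rw [hdk] at h1
    simp only [SimpleGraph.Walk.length_cons]
    omega
  have hreach : (deleteVert G (p k)).Reachable ⟨x, hmem1⟩ ⟨p d, hmem2⟩ := ⟨Wfull⟩
  obtain ⟨W, hW⟩ := hreach.exists_walk_length_eq_dist
  have := hlower W
  omega
end

section
/- Let G be a graph on [n] with n ≥ 4. Suppose there exists T' ∈ C(G) with |T'| = n − 3 and such that G − T' has exactly 2 connected components. Then either G ∈ G_T for some T ⊆ [n] with |T| = n − 2, or G = H ∗ (K_1 ∪̇ K_2) for some graph H on n − 3 vertices. -/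
open SimpleGraph

/-- The number of connected components of the induced subgraph `G - S`. -/
noncomputable def numComponents {V : Type} (G : SimpleGraph V) (S : Set V) : ℕ :=
  Nat.card ((G.induce Sᶜ).ConnectedComponent)

/-- `U` has the cut point property for `G` if every `v ∈ U` is a cut vertex of
`G - (U \ {v})`, i.e. deleting `v` from `G - (U \ {v})` increases the number of
connected components. -/
def HasCutPointProperty {V : Type} (G : SimpleGraph V) (U : Set V) : Prop :=
  ∀ v ∈ U, numComponents G (U \ {v}) < numComponents G U

/-- `G` belongs to the family `𝒢_T`. -/
def InGTFamily {n : ℕ} (G : SimpleGraph (Fin n)) (T : Set (Fin n)) : Prop :=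
  ∃ u w : Fin n, u ≠ w ∧ ¬ G.Adj u w ∧ u ∉ T ∧ w ∉ T ∧
    ∃ V0 V1 V2 : Set (Fin n),
      Disjoint V0 V1 ∧ Disjoint V0 V2 ∧ Disjoint V1 V2 ∧
      V1.Nonempty ∧ V2.Nonempty ∧ V0 ∪ V1 ∪ V2 = T ∧
      G.neighborSet u = V0 ∪ V1 ∧ G.neighborSet w = V0 ∪ V2 ∧
      ∀ a ∈ V1, ∀ b ∈ V2, G.Adj a b


private lemma walk_closed {W : Type} {H : SimpleGraph W} {K : Set W}
    (hK : ∀ ⦃x⦄, x ∈ K → ∀ ⦃y⦄, H.Adj x y → y ∈ K) :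
    ∀ {u t : W}, H.Walk u t → u ∈ K → t ∈ K := by
  intro u t w
  induction w with
  | nil => exact id
  | cons h p ih => intro hu; exact ih (hK hu h)

private lemma reachable_first_step {W : Type} {H : SimpleGraph W} {u t : W}
    (h : H.Reachable u t) (hne : u ≠ t) : ∃ d, H.Adj u d := by
  obtain ⟨w⟩ := h
  cases w with
  | nil => exact absurd rfl hne
  | cons h p => exact ⟨_, h⟩

private lemma three_two {W : Type} [Finite W] (H : SimpleGraph W)
    (h3 : Nat.card W = 3) (h2 : Nat.card H.ConnectedComponent = 2) :
    ∃ a b c : W, a ≠ b ∧ a ≠ c ∧ b ≠ c ∧ H.Adj b c ∧ ¬ H.Adj a b ∧ ¬ H.Adj a c := by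
  classical
  have hni : ¬ Function.Injective H.connectedComponentMk := by
    intro hinj
    have := Nat.card_le_card_of_injective _ hinj
    omega
  rw [Function.not_injective_iff] at hni
  obtain ⟨b, c, hmkeq, hne⟩ := hni
  have hD : ∃ D : H.ConnectedComponent, D ≠ H.connectedComponentMk b := by
    by_contra h
    push_neg at h
    have hss : Subsingleton H.ConnectedComponent := ⟨fun x y => (h x).trans (h y).symm⟩
    have := Nat.card_eq_one_iff_unique.mpr ⟨hss, ⟨H.connectedComponentMk b⟩⟩
    omega
  obtain ⟨D, hDne⟩ := hD
  obtain ⟨a, rfl⟩ := D.exists_rep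
  have hab : a ≠ b := fun h => hDne (by rw [h]; exact rfl)
  have hac : a ≠ c := fun h => hDne (by rw [h]; exact hmkeq.symm)
  have hnab : ¬ H.Adj a b := fun h => hDne (SimpleGraph.ConnectedComponent.sound h.reachable)
  have hnac : ¬ H.Adj a c := fun h =>
    hDne ((SimpleGraph.ConnectedComponent.sound h.reachable).trans hmkeq.symm)
  -- coverage
  have : Fintype W := Fintype.ofFinite W
  have hcard : Fintype.card W = 3 := by rw [← Nat.card_eq_fintype_card]; exact h3
  have hcov : ∀ w : W, w = a ∨ w = b ∨ w = c := by
    intro w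
    have huniv : ({a, b, c} : Finset W) = Finset.univ := by
      apply Finset.eq_univ_of_card
      rw [hcard]
      rw [Finset.card_insert_of_notMem (by simp [hab, hac]),
        Finset.card_insert_of_notMem (by simp [hne]), Finset.card_singleton]
    have : w ∈ ({a, b, c} : Finset W) := huniv ▸ Finset.mem_univ w
    simpa using this
  -- Adj b c
  obtain ⟨d, hd⟩ := reachable_first_step (SimpleGraph.ConnectedComponent.exact hmkeq) hne
  rcases hcov d with rfl | rfl | rfl
  · exact absurd hd.symm hnab
  · exact absurd hd (H.irrefl)
  · exact ⟨a, b, d, hab, hac, hne, hd, hnab, hnac⟩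

private lemma aux_left {n : ℕ} (G : SimpleGraph (Fin n)) (T' : Set (Fin n)) (a b c v : Fin n)
    (hbc : b ≠ c) (hAdjbc : G.Adj b c) (hnab : ¬ G.Adj a b) (hnac : ¬ G.Adj a c)
    (hset : ({a, b, c} : Set (Fin n)) = T'ᶜ)
    (key : ∀ t ∈ T', G.Adj a t ∧ (G.Adj t b ∨ G.Adj t c))
    (hv : v ∈ T') (hvc : ¬ G.Adj v c) :
    ∃ T : Set (Fin n), T.ncard = n - 2 ∧ InGTFamily G T := by
  classical
  have hac : a ≠ c := fun h => hnab (by rw [h]; exact hAdjbc.symm)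
  refine ⟨{a, c}ᶜ, ?_, ?_⟩
  · have h := Set.ncard_add_ncard_compl ({a, c} : Set (Fin n))
    rw [Nat.card_eq_fintype_card, Fintype.card_fin, Set.ncard_pair hac] at h
    omega
  · refine ⟨a, c, hac, hnac, by simp, by simp, G.neighborSet a ∩ G.neighborSet c,
      G.neighborSet a \ G.neighborSet c, G.neighborSet c \ G.neighborSet a,
      ?_, ?_, ?_, ⟨v, ?_⟩, ⟨b, ?_⟩, ?_, ?_, ?_, ?_⟩
    · exact Set.disjoint_left.mpr fun x hx hx2 => hx2.2 hx.2
    · exact Set.disjoint_left.mpr fun x hx hx2 => hx2.2 hx.1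
    · exact Set.disjoint_left.mpr fun x hx hx2 => hx2.2 hx.1
    · exact ⟨(key v hv).1, fun h => hvc h.symm⟩
    · exact ⟨hAdjbc.symm, hnab⟩
    · -- union equals {a, c}ᶜ
      ext x
      simp only [Set.mem_union, Set.mem_inter_iff, Set.mem_diff, Set.mem_compl_iff,
        Set.mem_insert_iff, Set.mem_singleton_iff, SimpleGraph.mem_neighborSet]
      constructor
      · rintro ((⟨h1, h2⟩ | ⟨h1, h2⟩) | ⟨h1, h2⟩) <;> push_neg
        · exact ⟨fun h => G.irrefl (h ▸ h1), fun h => G.irrefl (h ▸ h2)⟩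
        · exact ⟨fun h => G.irrefl (h ▸ h1), fun h => hnac (h ▸ h1)⟩
        · exact ⟨fun h => hnac (h ▸ h1).symm, fun h => G.irrefl (h ▸ h1)⟩
      · intro h
        push_neg at h
        obtain ⟨hxa, hxc⟩ := h
        by_cases hxb : x = b
        · subst hxb
          by_cases h1 : G.Adj a x
          · exact Or.inl (Or.inl ⟨h1, hAdjbc.symm⟩)
          · exact Or.inr ⟨hAdjbc.symm, h1⟩
        · have hxT : x ∈ T' := by
            by_contra hT
            have : x ∈ ({a, b, c} : Set (Fin n)) := hset.symm ▸ (hT : x ∈ T'ᶜ)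
            rcases this with h | h | h
            · exact hxa h
            · exact hxb h
            · exact hxc h
          have h1 := (key x hxT).1
          by_cases h2 : G.Adj c x
          · exact Or.inl (Or.inl ⟨h1, h2⟩)
          · exact Or.inl (Or.inr ⟨h1, h2⟩)
    · exact (Set.inter_union_diff _ _).symm
    · rw [Set.inter_comm]; exact (Set.inter_union_diff _ _).symm
    · -- all edges between V1 and V2
      rintro p ⟨hpa, hpc⟩ q ⟨hqc, hqa⟩
      rw [SimpleGraph.mem_neighborSet] at hpa hqc
      rw [SimpleGraph.mem_neighborSet] at hpc hqa
      have hqb : q = b := by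
        have hqT : q ∉ T' := fun hT => hqa (key q hT).1
        have : q ∈ ({a, b, c} : Set (Fin n)) := hset.symm ▸ (hqT : q ∈ T'ᶜ)
        rcases this with h | h | h
        · subst h; exact absurd hqc.symm hnac
        · exact h
        · subst h; exact absurd hqc (G.irrefl)
      have hpT : p ∈ T' := by
        by_contra hT
        have : p ∈ ({a, b, c} : Set (Fin n)) := hset.symm ▸ (hT : p ∈ T'ᶜ)
        rcases this with h | h | h
        · subst h; exact absurd hpa (G.irrefl)
        · subst h; exact hpc hAdjbc.symm
        · subst h; exact hnac hpa
      rcases (key p hpT).2 with h | h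
      · rw [hqb]; exact h
      · exact absurd h.symm hpc

/-- if some `T' ∈ 𝒞(G)` with `|T'| = n - 3` leaves exactly two
connected components, then either `G ∈ 𝒢_T` for some `T` with `|T| = n - 2`, or
`G = H ∗ (K₁ ∪̇ K₂)` for some graph `H` on `n - 3` vertices. -/
theorem stmt14 {n : ℕ} (hn : 4 ≤ n) (G : SimpleGraph (Fin n))
    (T' : Set (Fin n)) (hcpp : HasCutPointProperty G T')
    (hcard : T'.ncard = n - 3) (hcomp : numComponents G T' = 2) :
    (∃ T : Set (Fin n), T.ncard = n - 2 ∧ InGTFamily G T) ∨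
      (∃ a b c : Fin n, a ≠ b ∧ a ≠ c ∧ b ≠ c ∧
        G.Adj b c ∧ ¬ G.Adj a b ∧ ¬ G.Adj a c ∧
        ∀ x : Fin n, x ≠ a → x ≠ b → x ≠ c →
          G.Adj x a ∧ G.Adj x b ∧ G.Adj x c) := by
  classical
  -- |T'ᶜ| = 3
  have hcompl : T'ᶜ.ncard = 3 := by
    have h := Set.ncard_add_ncard_compl T'
    rw [Nat.card_eq_fintype_card, Fintype.card_fin, hcard] at h
    omega
  have h3 : Nat.card (↥T'ᶜ) = 3 := by rw [Nat.card_coe_set_eq]; exact hcompl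
  have h2 : Nat.card ((G.induce T'ᶜ).ConnectedComponent) = 2 := hcomp
  obtain ⟨a', b', c', hab', hac', hbc', hAdjbc', hnab', hnac'⟩ := three_two _ h3 h2
  set a : Fin n := ↑a' with ha
  set b : Fin n := ↑b' with hb
  set c : Fin n := ↑c' with hc
  have hab : a ≠ b := fun h => hab' (Subtype.ext h)
  have hac : a ≠ c := fun h => hac' (Subtype.ext h)
  have hbc : b ≠ c := fun h => hbc' (Subtype.ext h)
  have hAdjbc : G.Adj b c := hAdjbc'
  have hnab : ¬ G.Adj a b := fun h => hnab' h
  have hnac : ¬ G.Adj a c := fun h => hnac' h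
  have hamem : a ∈ T'ᶜ := a'.2
  have hbmem : b ∈ T'ᶜ := b'.2
  have hcmem : c ∈ T'ᶜ := c'.2
  have hset : ({a, b, c} : Set (Fin n)) = T'ᶜ := by
    apply Set.eq_of_subset_of_ncard_le
    · rintro x (rfl | rfl | rfl) <;> assumption
    · rw [hcompl, Set.ncard_insert_of_notMem (by simp [hab, hac]),
        Set.ncard_pair hbc]
    · exact Set.toFinite _
  -- key fact for every v ∈ T'
  have key : ∀ v ∈ T', G.Adj a v ∧ (G.Adj v b ∨ G.Adj v c) := by
    intro v hv
    have hlt := hcpp v hv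
    rw [hcomp] at hlt
    set S : Set (Fin n) := (T' \ {v})ᶜ with hS
    have hmem : ∀ x : Fin n, x ∈ S ↔ (x = a ∨ x = b ∨ x = c ∨ x = v) := by
      intro x
      constructor
      · intro h
        by_cases hx : x ∈ T'
        · right; right; right
          by_contra hxv
          exact h ⟨hx, hxv⟩
        · have : x ∈ ({a, b, c} : Set (Fin n)) := hset.symm ▸ (hx : x ∈ T'ᶜ)
          rcases this with h | h | h
          · exact Or.inl h
          · exact Or.inr (Or.inl h)
          · exact Or.inr (Or.inr (Or.inl h))
      · rintro (rfl | rfl | rfl | rfl)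
        · exact fun h => hamem h.1
        · exact fun h => hbmem h.1
        · exact fun h => hcmem h.1
        · exact fun h => h.2 rfl
    have haS : a ∈ S := (hmem a).mpr (Or.inl rfl)
    have hbS : b ∈ S := (hmem b).mpr (Or.inr (Or.inl rfl))
    have hcS : c ∈ S := (hmem c).mpr (Or.inr (Or.inr (Or.inl rfl)))
    have hvS : v ∈ S := (hmem v).mpr (Or.inr (Or.inr (Or.inr rfl)))
    have hav : a ≠ v := fun h => hamem (h ▸ hv)
    have : Nonempty (↥S) := ⟨⟨a, haS⟩⟩
    have : Nonempty ((G.induce S).ConnectedComponent) :=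
      ⟨(G.induce S).connectedComponentMk ⟨a, haS⟩⟩
    have h1 : Nat.card ((G.induce S).ConnectedComponent) = 1 := by
      have hpos : 0 < Nat.card ((G.induce S).ConnectedComponent) := Nat.card_pos
      have : numComponents G (T' \ {v}) = Nat.card ((G.induce S).ConnectedComponent) := rfl
      omega
    have hreach : ∀ p q : ↥S, (G.induce S).Reachable p q := by
      intro p q
      obtain ⟨x, hx⟩ := Nat.card_eq_one_iff_exists.mp h1
      exact SimpleGraph.ConnectedComponent.exact ((hx _).trans (hx _).symm)
    constructor
    · -- G.Adj a v
      obtain ⟨d, hd⟩ := reachable_first_step (hreach ⟨a, haS⟩ ⟨v, hvS⟩)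
        (fun h => hav (congrArg Subtype.val h))
      have hd' : G.Adj a ↑d := hd
      rcases (hmem ↑d).mp d.2 with h | h | h | h
      · rw [h] at hd'; exact absurd hd' (G.irrefl)
      · rw [h] at hd'; exact absurd hd' hnab
      · rw [h] at hd'; exact absurd hd' hnac
      · exact h ▸ hd'
    · -- G.Adj v b ∨ G.Adj v c
      by_contra hcon
      push_neg at hcon
      obtain ⟨hvb, hvc⟩ := hcon
      set K : Set (↥S) := {x | (x : Fin n) = b ∨ (x : Fin n) = c} with hK
      have hclosed : ∀ ⦃x⦄, x ∈ K → ∀ ⦃y⦄, (G.induce S).Adj x y → y ∈ K := by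
        rintro x hx y hadj
        have hadj' : G.Adj ↑x ↑y := hadj
        rcases (hmem ↑y).mp y.2 with h | h | h | h
        · exfalso
          rw [h] at hadj'
          rcases hx with h' | h' <;> rw [h'] at hadj'
          · exact hnab hadj'.symm
          · exact hnac hadj'.symm
        · exact Or.inl h
        · exact Or.inr h
        · exfalso
          rw [h] at hadj'
          rcases hx with h' | h' <;> rw [h'] at hadj'
          · exact hvb hadj'.symm
          · exact hvc hadj'.symm
      obtain ⟨w⟩ := hreach ⟨b, hbS⟩ ⟨a, haS⟩
      have := walk_closed hclosed w (Or.inl rfl)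
      rcases this with h | h
      · exact hab h
      · exact hac h
  by_cases hall : ∀ v ∈ T', G.Adj v b ∧ G.Adj v c
  · right
    refine ⟨a, b, c, hab, hac, hbc, hAdjbc, hnab, hnac, ?_⟩
    intro x hxa hxb hxc
    have hxT : x ∈ T' := by
      by_contra h
      have : x ∈ ({a, b, c} : Set (Fin n)) := hset.symm ▸ (h : x ∈ T'ᶜ)
      rcases this with h | h | h
      · exact hxa h
      · exact hxb h
      · exact hxc h
    exact ⟨((key x hxT).1).symm, (hall x hxT).1, (hall x hxT).2⟩
  · left
    push_neg at hall
    obtain ⟨v, hv, hvfail⟩ := hall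
    by_cases hvc : G.Adj v c
    · -- then ¬ G.Adj v b; use swapped version
      have hvb : ¬ G.Adj v b := fun h => (hvfail h) hvc
      have hset' : ({a, c, b} : Set (Fin n)) = T'ᶜ := by
        rw [Set.pair_comm c b]; exact hset
      have key' : ∀ t ∈ T', G.Adj a t ∧ (G.Adj t c ∨ G.Adj t b) := fun t ht =>
        ⟨(key t ht).1, ((key t ht).2).symm⟩
      exact aux_left G T' a c b v hbc.symm hAdjbc.symm hnac hnab hset' key' hv hvb
    · exact aux_left G T' a b c v hbc hAdjbc hnab hnac hset key hv hvc
end
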